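/- (Cubic symmetric Darboux case.) Assume λ₀ = ξ₀ = ν₀ = θ₀ = ω₀ = η₀ = 0, 4μ₀² − a₀² = 0 and a₀ ≠ 0. Then v̄_{1,1} = λ₁, v̄_{3,1} = ξ₁, v̄_{5,1} = a₀ ν₁, and v̄_{7,1} = v̄_{9,1} = v̄_{11,1} = 0. If moreover λ₁ = ξ₁ = ν₁ = 0, then v̄_{1,2} = λ₂, v̄_{3,2} = ξ₂, v̄_{5,2} = a₀ ν₂, v̄_{7,2} = a₀ θ₁ ω₁, v̄_{9,2} = a₀² θ₁ η₁, and v̄_{11,2} = a₀² θ₁ (8μ₀μ₁ − 2a₀a₁). -/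

import Mathlib

open PowerSeries


private lemma c0mul (f g : PowerSeries ℝ) :
    coeff 0 (f * g) = coeff 0 f * coeff 0 g := by
  simp [coeff_mul]

private lemma c4 (n : ℕ) : coeff n (4 : PowerSeries ℝ) = if n = 0 then 4 else 0 := by
  have : (4 : PowerSeries ℝ) = C (4 : ℝ) := (map_ofNat (C (R := ℝ)) 4).symm
  rw [this, coeff_C]

private lemma c40 : coeff 0 (4 : PowerSeries ℝ) = 4 := by rw [c4]; simp
private lemma c41 : coeff 1 (4 : PowerSeries ℝ) = 0 := by rw [c4]; simp
private lemma c42 : coeff 2 (4 : PowerSeries ℝ) = 0 := by rw [c4]; simp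

private lemma c1mul (f g : PowerSeries ℝ) :
    coeff 1 (f * g) = coeff 0 f * coeff 1 g + coeff 1 f * coeff 0 g := by
  simp [coeff_mul, Finset.Nat.sum_antidiagonal_eq_sum_range_succ_mk, Finset.sum_range_succ]

private lemma c2mul (f g : PowerSeries ℝ) :
    coeff 2 (f * g) = coeff 0 f * coeff 2 g + coeff 1 f * coeff 1 g
      + coeff 2 f * coeff 0 g := by
  simp [coeff_mul, Finset.Nat.sum_antidiagonal_eq_sum_range_succ_mk, Finset.sum_range_succ]

/-- Cubic symmetric Darboux case. -/
theorem cubic_symmetric_darboux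
    (lam w th a e m xi nu : PowerSeries ℝ)
    (v1 v3 v5 v7 v9 v11 : PowerSeries ℝ)
    (hv1 : v1 = lam)
    (hv3 : v3 = xi)
    (hv5 : v5 = nu * a)
    (hv7 : v7 = w * th * a)
    (hv9 : v9 = th * a ^ 2 * e)
    (hv11 : v11 = th * (4 * (m ^ 2 + th ^ 2) - a ^ 2) * a ^ 2)
    (hlam0 : coeff 0 lam = 0)
    (hxi0 : coeff 0 xi = 0)
    (hnu0 : coeff 0 nu = 0)
    (hth0 : coeff 0 th = 0)
    (hw0 : coeff 0 w = 0)
    (he0 : coeff 0 e = 0)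
    (hD : 4 * (coeff 0 m) ^ 2 - (coeff 0 a) ^ 2 = 0)
    (ha0 : coeff 0 a ≠ 0) :
    coeff 1 v1 = coeff 1 lam ∧
    coeff 1 v3 = coeff 1 xi ∧
    coeff 1 v5 = coeff 0 a * coeff 1 nu ∧
    coeff 1 v7 = 0 ∧ coeff 1 v9 = 0 ∧ coeff 1 v11 = 0 ∧
    (coeff 1 lam = 0 → coeff 1 xi = 0 → coeff 1 nu = 0 →
      coeff 2 v1 = coeff 2 lam ∧
      coeff 2 v3 = coeff 2 xi ∧
      coeff 2 v5 = coeff 0 a * coeff 2 nu ∧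
      coeff 2 v7 = coeff 0 a * coeff 1 th * coeff 1 w ∧
      coeff 2 v9 = (coeff 0 a) ^ 2 * coeff 1 th * coeff 1 e ∧
      coeff 2 v11 = (coeff 0 a) ^ 2 * coeff 1 th
        * (8 * coeff 0 m * coeff 1 m - 2 * coeff 0 a * coeff 1 a)) := by
  subst hv1 hv3 hv5 hv7 hv9 hv11
  simp only [pow_two, c0mul, c1mul, c2mul, map_sub, map_add, c40, c41, c42]
  simp only [hlam0, hxi0, hnu0, hth0, hw0, he0]
  refine ⟨trivial, trivial, by ring, by ring, by ring,
    by linear_combination (coeff 1 th * (coeff 0 a * coeff 0 a)) * hD,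
    fun h1 h2 h3 => ?_⟩
  simp only [h3]
  refine ⟨trivial, trivial, by ring, by ring, by ring, ?_⟩
  linear_combination (coeff 2 th * (coeff 0 a * coeff 0 a)
    + 2 * coeff 0 a * coeff 1 a * coeff 1 th) * hD
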